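/- Let G be a finite connected simple graph on a vertex set V with an edge-weight function w assigning a real weight to each edge, and suppose w is injective on the edge set (all edge weights are distinct). Let T be a minimum spanning tree of G, i.e., a spanning subgraph of G that is a tree and whose total edge weight is less than or equal to that of every spanning subgraph of G that is a tree. Then for every pair of vertices S and D, the unique path from S to D in T is a minimax (safest) path in G: the maximum edge weight appearing on this path is less than or equal to the maximum edge weight appearing on every path from S to D in G. -/

import Mathlib

open SimpleGraph

/-- `T` is a spanning tree of `G`: a spanning subgraph (same vertex set, edges of `G`)
that is a tree (connected and acyclic). -/
def IsSpanningTree {V : Type*} (G T : SimpleGraph V) : Prop :=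
  T ≤ G ∧ T.IsTree

/-- Total edge weight of a graph (sum of `w` over its edge set). -/
noncomputable def totalWeight {V : Type*} [Fintype V] (w : Sym2 V → ℝ)
    (T : SimpleGraph V) : ℝ :=
  ∑ e ∈ T.edgeSet.toFinite.toFinset, w e

private lemma walk_crossing {V : Type*} {G : SimpleGraph V} (P : V → Prop) :
    ∀ {x y : V} (p : G.Walk x y), P x → ¬ P y →
      ∃ a b, s(a, b) ∈ p.edges ∧ P a ∧ ¬ P b := by
  intro x y p
  induction p with
  | nil => exact fun h h' => absurd h h'
  | @cons x c y h q ih =>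
    intro hx hy
    by_cases hc : P c
    · obtain ⟨a, b, hab, ha, hb⟩ := ih hc hy
      exact ⟨a, b, by simp [hab], ha, hb⟩
    · exact ⟨x, c, by simp, hx, hc⟩

private lemma walk_dichotomy {V : Type*} {T : SimpleGraph V} {u v : V}
    (huv : ¬ (T.deleteEdges {s(u, v)}).Reachable u v) :
    ∀ {x y : V} (p : T.Walk x y),
      (T.deleteEdges {s(u, v)}).Reachable x y ∨
      ((T.deleteEdges {s(u, v)}).Reachable x u ∧ (T.deleteEdges {s(u, v)}).Reachable v y) ∨
      ((T.deleteEdges {s(u, v)}).Reachable x v ∧ (T.deleteEdges {s(u, v)}).Reachable u y) := by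
  intro x y p
  induction p with
  | nil => exact Or.inl (Reachable.refl _)
  | @cons x c y h q ih =>
    by_cases he : s(x, c) = s(u, v)
    · rw [Sym2.eq_iff] at he
      rcases he with ⟨rfl, rfl⟩ | ⟨rfl, rfl⟩
      · rcases ih with h1 | ⟨h1, h2⟩ | ⟨h1, h2⟩
        · exact Or.inr (Or.inl ⟨Reachable.refl _, h1⟩)
        · exact absurd h1.symm huv
        · exact Or.inl h2
      · rcases ih with h1 | ⟨h1, h2⟩ | ⟨h1, h2⟩
        · exact Or.inr (Or.inr ⟨Reachable.refl _, h1⟩)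
        · exact Or.inl h2
        · exact absurd h1 huv
    · have hadj : (T.deleteEdges {s(u, v)}).Adj x c := by
        rw [deleteEdges_adj]
        exact ⟨h, by simpa using he⟩
      rcases ih with h1 | ⟨h1, h2⟩ | ⟨h1, h2⟩
      · exact Or.inl (hadj.reachable.trans h1)
      · exact Or.inr (Or.inl ⟨hadj.reachable.trans h1, h2⟩)
      · exact Or.inr (Or.inr ⟨hadj.reachable.trans h1, h2⟩)

private lemma exchange_false {V : Type*} [Fintype V]
    {G T : SimpleGraph V} (hT : IsSpanningTree G T)
    {w : Sym2 V → ℝ}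
    (hmin : ∀ T', IsSpanningTree G T' → totalWeight w T ≤ totalWeight w T')
    {u v S D : V} (huvT : T.Adj u v)
    (hSu : (T.deleteEdges {s(u, v)}).Reachable u S)
    (hSD : ¬ (T.deleteEdges {s(u, v)}).Reachable S D)
    (pG : G.Walk S D)
    (hsmall : ∀ f ∈ pG.edges, w f < w s(u, v)) : False := by
  classical
  set T' := T.deleteEdges {s(u, v)} with hT'def
  have huv : ¬ T'.Reachable u v := by
    intro h
    obtain ⟨x, c, hc, -⟩ :=
      (adj_and_reachable_delete_edges_iff_exists_cycle (G := T)).mp ⟨huvT, h⟩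
    exact hT.2.IsAcyclic c hc
  have hdi : ∀ x, T'.Reachable u x ∨ T'.Reachable v x := by
    intro x
    obtain ⟨p⟩ := hT.2.isConnected.preconnected u x
    rcases walk_dichotomy huv p with h | ⟨-, h2⟩ | ⟨h1, -⟩
    · exact Or.inl h
    · exact Or.inr h2
    · exact absurd h1 huv
  obtain ⟨a, b, hfmem, hPa, hPb⟩ :=
    walk_crossing (fun x => T'.Reachable u x) pG hSu (fun h => hSD (hSu.symm.trans h))
  have hvb : T'.Reachable v b := (hdi b).resolve_left hPb
  have hab : G.Adj a b := pG.adj_of_mem_edges hfmem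
  have hwf : w s(a, b) < w s(u, v) := hsmall _ hfmem
  have hfne : s(a, b) ≠ s(u, v) := fun h => by rw [h] at hwf; exact lt_irrefl _ hwf
  have hfT' : s(a, b) ∉ T'.edgeSet := fun h =>
    hPb (hPa.trans (SimpleGraph.Adj.reachable ((SimpleGraph.mem_edgeSet _).mp h)))
  have hfT : s(a, b) ∉ T.edgeSet := by
    intro h
    apply hfT'
    rw [hT'def, edgeSet_deleteEdges]
    exact ⟨h, by simpa using hfne⟩
  set T'' := T' ⊔ fromEdgeSet {s(a, b)} with hT''def
  have hle'' : T'' ≤ G := by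
    apply sup_le
    · exact le_trans (deleteEdges_le _) hT.1
    · calc fromEdgeSet {s(a, b)} ≤ fromEdgeSet G.edgeSet :=
            fromEdgeSet_mono (by simpa using hab)
        _ = G := fromEdgeSet_edgeSet G
  have hT'le : T' ≤ T'' := le_sup_left
  have hT''ab : T''.Adj a b :=
    (le_sup_right : fromEdgeSet {s(a, b)} ≤ T'')
      ((fromEdgeSet_adj _).mpr ⟨Set.mem_singleton _, hab.ne⟩)
  have huv'' : T''.Reachable u v :=
    ((hPa.mono hT'le).trans hT''ab.reachable).trans ((hvb.mono hT'le).symm)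
  have hconn : T''.Connected := by
    rw [connected_iff]
    refine ⟨fun x y => ?_, ⟨u⟩⟩
    have key : ∀ z, T''.Reachable u z := by
      intro z
      rcases hdi z with h | h
      · exact h.mono hT'le
      · exact huv''.trans (h.mono hT'le)
    exact (key x).symm.trans (key y)
  have hacyc : T''.IsAcyclic := by
    intro x c hc
    by_cases hf : s(a, b) ∈ c.edges
    · have h2 := (adj_and_reachable_delete_edges_iff_exists_cycle (G := T'')).mpr ⟨x, c, hc, hf⟩
      have hre : T'.Reachable a b := by
        refine h2.2.mono ?_
        intro p q hpq
        rw [deleteEdges_adj, sup_adj] at hpq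
        rcases hpq.1 with h | h
        · exact h
        · exact absurd ((fromEdgeSet_adj _).mp h).1 hpq.2
      exact hPb (hPa.trans hre)
    · have hsub : ∀ e ∈ c.edges, e ∈ T'.edgeSet := by
        intro e he
        have hmem := c.edges_subset_edgeSet he
        rw [hT''def, edgeSet_sup, edgeSet_fromEdgeSet] at hmem
        rcases hmem with h | h
        · exact h
        · exact absurd (Set.mem_singleton_iff.mp h.1 ▸ he) hf
      exact hT.2.IsAcyclic _ ((hc.transfer hsub).mapLe (T.deleteEdges_le _))
  have hspan : IsSpanningTree G T'' := ⟨hle'', ⟨hconn, hacyc⟩⟩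
  have heuv : s(u, v) ∈ T.edgeSet := huvT
  have hEset : T''.edgeSet = insert s(a, b) (T.edgeSet \ {s(u, v)}) := by
    rw [hT''def, edgeSet_sup, hT'def, edgeSet_deleteEdges, edgeSet_fromEdgeSet]
    ext z
    simp only [Set.mem_union, Set.mem_diff, Set.mem_singleton_iff, Set.mem_insert_iff,
      Set.mem_setOf_eq]
    constructor
    · rintro (h | h)
      · exact Or.inr h
      · exact Or.inl h.1
    · rintro (rfl | h)
      · exact Or.inr ⟨rfl, by simp [Sym2.mk_isDiag_iff, hab.ne]⟩
      · exact Or.inl h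
  have hfin : T''.edgeSet.toFinite.toFinset
      = insert s(a, b) ((T.edgeSet.toFinite.toFinset).erase s(u, v)) := by
    ext z
    simp only [Set.Finite.mem_toFinset, hEset, Set.mem_insert_iff, Set.mem_diff,
      Set.mem_singleton_iff, Finset.mem_insert, Finset.mem_erase]
    tauto
  have hfnotin : s(a, b) ∉ (T.edgeSet.toFinite.toFinset).erase s(u, v) := by
    simp only [Finset.mem_erase, Set.Finite.mem_toFinset]
    tauto
  have hein : s(u, v) ∈ T.edgeSet.toFinite.toFinset := by
    simpa [Set.Finite.mem_toFinset] using heuv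
  have hsum := Finset.sum_erase_add (T.edgeSet.toFinite.toFinset) w hein
  have hW : totalWeight w T'' = totalWeight w T - w s(u, v) + w s(a, b) := by
    rw [totalWeight, totalWeight, hfin, Finset.sum_insert hfnotin]
    linarith
  have hge := hmin T'' hspan
  linarith

/-- If `T` is a minimum spanning tree of a finite connected graph `G` whose edge
weights are all distinct, then for every pair of vertices `S`, `D`, the (unique)
path from `S` to `D` in `T` is a minimax (safest) path in `G`: its maximum edge
weight is at most the maximum edge weight of every `S`–`D` path in `G`. -/
theorem mst_path_is_minimax {V : Type*} [Fintype V]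
    (G : SimpleGraph V) (hG : G.Connected)
    (w : Sym2 V → ℝ) (hw : Set.InjOn w G.edgeSet)
    (T : SimpleGraph V) (hT : IsSpanningTree G T)
    (hmin : ∀ T', IsSpanningTree G T' → totalWeight w T ≤ totalWeight w T')
    (S D : V)
    (pT : T.Walk S D) (hpT : pT.IsPath)
    (pG : G.Walk S D) (hpG : pG.IsPath) :
    (pT.edges.map w).maximum ≤ (pG.edges.map w).maximum := by
  classical
  by_contra hcon
  rw [not_le] at hcon
  have hne : (pT.edges.map w).maximum ≠ ⊥ := ne_bot_of_gt hcon
  obtain ⟨m, hm⟩ := WithBot.ne_bot_iff_exists.mp hne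
  have hmem := List.maximum_mem hm.symm
  obtain ⟨e, hemem, hwe⟩ := List.mem_map.mp hmem
  revert hemem hwe
  induction e using Sym2.ind with
  | _ u v =>
  intro hemem hwe
  have hadjT : T.Adj u v := pT.adj_of_mem_edges hemem
  set T' := T.deleteEdges {s(u, v)} with hT'def
  have hSD : ¬ T'.Reachable S D := by
    intro h
    obtain ⟨q⟩ := h
    have hq := q.toPath
    have hp2 : (hq.1.mapLe (T.deleteEdges_le _)).IsPath := hq.2.mapLe _
    have huniq := isAcyclic_iff_path_unique.mp hT.2.IsAcyclic ⟨pT, hpT⟩ ⟨_, hp2⟩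
    have hedges : pT.edges = (hq.1.mapLe (T.deleteEdges_le _)).edges :=
      congrArg (fun p : T.Path S D => p.1.edges) huniq
    rw [hedges] at hemem
    have h3 : s(u, v) ∈ hq.1.edges := by
      simpa [Walk.edges_mapLe_eq_edges]
        using hemem
    have h4 := hq.1.edges_subset_edgeSet h3
    rw [edgeSet_deleteEdges] at h4
    exact h4.2 rfl
  have hsmall : ∀ f ∈ pG.edges, w f < w s(u, v) := by
    intro f hf
    have h1 : (w f : WithBot ℝ) ≤ (pG.edges.map w).maximum :=
      List.le_maximum_of_mem' (List.mem_map_of_mem (f := w) hf)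
    have h2 : (pG.edges.map w).maximum < ((w s(u, v) : ℝ) : WithBot ℝ) := by
      rw [hwe, hm]
      exact hcon
    exact WithBot.coe_lt_coe.mp (lt_of_le_of_lt h1 h2)
  have huv : ¬ T'.Reachable u v := by
    intro h
    obtain ⟨x, c, hc, -⟩ :=
      (adj_and_reachable_delete_edges_iff_exists_cycle (G := T)).mp ⟨hadjT, h⟩
    exact hT.2.IsAcyclic c hc
  obtain ⟨p⟩ := hT.2.isConnected.preconnected u S
  rcases walk_dichotomy huv p with h | ⟨-, h2⟩ | ⟨h1, -⟩
  · exact exchange_false hT hmin hadjT h hSD pG hsmall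
  · have hswap : s(v, u) = s(u, v) := Sym2.eq_swap
    refine exchange_false (u := v) (v := u) hT hmin hadjT.symm ?_ ?_ pG ?_
    · rw [hswap]; exact h2
    · rw [hswap]; exact hSD
    · intro f hf; rw [hswap]; exact hsmall f hf
  · exact absurd h1 huv
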